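/- Let θ ∈ [π/2, π), α > 0, and set ρ := (1/(2α))·(1 − 1/sin(θ)) < 0. If B is a θ-angle-bounded set-valued operator on a real Hilbert space H, then B + α·id is ρ-comonotone, i.e., ⟨x − y, u − v⟩ ≥ ρ‖u − v‖² for all (x,u), (y,v) in the graph of B + α·id. -/

import Mathlib

/-- A set-valued operator `A` on a real Hilbert space is `θ`-angle-bounded if
`⟪x - y, u - v⟫ ≥ cos(θ)‖x - y‖‖u - v‖` for all `(x,u)`, `(y,v)` in its graph. -/
def AngleBounded {H : Type*} [NormedAddCommGroup H] [InnerProductSpace ℝ H]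
    (θ : ℝ) (A : H → Set H) : Prop :=
  ∀ ⦃x u y v : H⦄, u ∈ A x → v ∈ A y →
    (inner ℝ (x - y) (u - v) : ℝ) ≥ Real.cos θ * (‖x - y‖ * ‖u - v‖)

/-- A set-valued operator `A` is `ρ`-comonotone if
`⟪x - y, u - v⟫ ≥ ρ‖u - v‖²` for all `(x,u)`, `(y,v)` in its graph. -/
def Comonotone {H : Type*} [NormedAddCommGroup H] [InnerProductSpace ℝ H]
    (ρ : ℝ) (A : H → Set H) : Prop :=
  ∀ ⦃x u y v : H⦄, u ∈ A x → v ∈ A y →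
    (inner ℝ (x - y) (u - v) : ℝ) ≥ ρ * ‖u - v‖ ^ 2

theorem stmt_8 {H : Type*} [NormedAddCommGroup H] [InnerProductSpace ℝ H] [CompleteSpace H]
    (θ α : ℝ) (hθ : θ ∈ Set.Ico (Real.pi / 2) Real.pi) (hα : α > 0)
    (B : H → Set H) (hB : AngleBounded θ B) :
    Comonotone (1 / (2 * α) * (1 - 1 / Real.sin θ))
      (fun x => (fun u => u + α • x) '' B x) := by
  intro x u' y v' hu' hv'
  obtain ⟨u, hu, rfl⟩ := hu'
  obtain ⟨v, hv, rfl⟩ := hv'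
  have hI := hB hu hv
  set a : H := x - y with ha
  set b : H := u - v with hb
  have hw : (u + α • x) - (v + α • y) = b + α • a := by
    rw [ha, hb]; module
  set s := Real.sin θ with hsdef
  set c := Real.cos θ with hcdef
  have hθ0 : 0 < θ := lt_of_lt_of_le (by positivity) hθ.1
  have hs : 0 < s := Real.sin_pos_of_pos_of_lt_pi hθ0 hθ.2
  have hs1 : s ≤ 1 := Real.sin_le_one θ
  have hc : c ≤ 0 := Real.cos_nonpos_of_pi_div_two_le_of_le hθ.1
    (le_trans hθ.2.le (by linarith [Real.pi_pos]))
  have hcs : c ^ 2 + s ^ 2 = 1 := Real.cos_sq_add_sin_sq θ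
  have h1 : (inner ℝ (x - y) ((u + α • x) - (v + α • y)) : ℝ)
      = inner ℝ a b + α * ‖a‖ ^ 2 := by
    rw [hw, ← ha]
    rw [inner_add_right, real_inner_smul_right, real_inner_self_eq_norm_sq]
  have h2 : ‖(u + α • x) - (v + α • y)‖ ^ 2
      = ‖b‖ ^ 2 + 2 * α * inner ℝ a b + α ^ 2 * ‖a‖ ^ 2 := by
    rw [hw, norm_add_sq_real, norm_smul, real_inner_smul_right,
      real_inner_comm b a]
    simp [abs_of_pos hα, mul_pow]
    ring
  rw [h1, h2, ge_iff_le]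
  set A := ‖a‖ with hA
  set Bn := ‖b‖ with hBn
  set I : ℝ := inner ℝ a b with hIdef
  have hA0 : 0 ≤ A := norm_nonneg a
  have hB0 : 0 ≤ Bn := norm_nonneg b
  have hIc : I ≥ c * (A * Bn) := hI
  have key : 2 * α * I + α ^ 2 * (1 + s) * A ^ 2 + (1 - s) * Bn ^ 2 ≥ 0 := by
    nlinarith [sq_nonneg (α * (1 + s) * A + c * Bn),
      mul_nonneg (mul_pos hα hα).le (mul_nonneg hA0 hB0),
      mul_nonneg (by linarith : (0:ℝ) ≤ 1 + s)
        (by nlinarith : 0 ≤ 2 * α * I - 2 * α * (c * (A * Bn)))]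
  have heq : 1 / (2 * α) * (1 - 1 / s) = (s - 1) / (2 * α * s) := by
    field_simp
  rw [heq, div_mul_eq_mul_div, div_le_iff₀ (by positivity)]
  nlinarith [mul_nonneg hs.le key]
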